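/- arXiv:0907.2470 — 3 statements merged into one kernel-verified Lean document; each statement's English description precedes it below -/
import Mathlib

section
/- Let E₁ = ε # φ₀. Then lim_{n→∞} 2ⁿ E₁(2^{−n}) = 1/3 + 5/(14√7). -/
open scoped BigOperators

noncomputable section

attribute [local instance] Classical.propDecidable

/-- `I`: the set of dyadic rationals in `[0,1]`. -/
def dyadicI : Set ℚ := {t | 0 ≤ t ∧ t ≤ 1 ∧ ∃ i n : ℕ, t = (i : ℚ) / 2 ^ n}

/-- `X` is the ℚ-vector space of functions `I → ℚ`. -/
abbrev X : Type := dyadicI → ℚ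

lemma dyadicI_mem {i n : ℕ} (h : i ≤ 2 ^ n) : (i : ℚ) / 2 ^ n ∈ dyadicI := by
  refine ⟨by positivity, ?_, i, n, rfl⟩
  rw [div_le_one (by positivity)]
  exact_mod_cast h

lemma zero_mem_dyadicI : (0 : ℚ) ∈ dyadicI := by
  simpa using dyadicI_mem (i := 0) (n := 0) (by norm_num)

lemma one_mem_dyadicI : (1 : ℚ) ∈ dyadicI := by
  simpa using dyadicI_mem (i := 1) (n := 0) (by norm_num)

lemma half_mem_dyadicI : (1 / 2 : ℚ) ∈ dyadicI := by
  have := dyadicI_mem (i := 1) (n := 1) (by norm_num)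
  norm_num at this ⊢
  exact this

/-- Evaluation of `α : X` at a rational, extended by `0` off `I`. -/
def evI (α : X) (t : ℚ) : ℚ := if h : t ∈ dyadicI then α ⟨t, h⟩ else 0

/-- The map `T₀ : X → X`, `(T₀ α)(t) = α (t/2)`. -/
def T0 (α : X) : X := fun t => evI α (t.1 / 2)

/-- The map `T₁ : X → X`, `(T₁ α)(t) = α ((1+t)/2)`. -/
def T1 (α : X) : X := fun t => evI α ((1 + t.1) / 2)

/-- Auxiliary recursion (on the exponent of the denominator) defining `α # β`. -/
def hashAux : ℕ → X → X → ℚ → ℚ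
  | 0, α, β, t =>
      if t = 0 then 0 else (evI α 1 - evI α 0) * (evI β 1 - evI β 0)
  | n + 1, α, β, t =>
      if t ≤ 1 / 2 then
        hashAux n (T0 α) (T0 β) (2 * t) + hashAux n (T1 α) (T1 β) (2 * t)
      else
        hashAux n (T0 α) (T0 β) 1 + hashAux n (T1 α) (T1 β) 1 +
          hashAux n (T0 α) (T1 β) (2 * t - 1) + hashAux n (T1 α) (T0 β) (2 * t - 1)

/-- The product `α # β` on `X`. -/
def hash (α β : X) : X := fun t => hashAux (padicValNat 2 t.1.den) α β t.1

/-- The element `t ↦ t` of `X`. -/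
def tId : X := fun t => t.1

/-- The element `ε : t ↦ t − t²` of `X`. -/
def epsX : X := fun t => t.1 - t.1 ^ 2

/-- The constant function `1` in `X`. -/
def oneX : X := fun _ => (1 : ℚ)

/-- Convexity: `2α(i/q) ≥ α((i−1)/q) + α((i+1)/q)` for all powers of two `q = 2^n`, `0 < i < q`. -/
def ConvexX (α : X) : Prop :=
  ∀ n i : ℕ, 0 < i → i < 2 ^ n →
    evI α (((i : ℚ) - 1) / 2 ^ n) + evI α (((i : ℚ) + 1) / 2 ^ n)
      ≤ 2 * evI α ((i : ℚ) / 2 ^ n)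

/-- `α` is Lipschitz with constant `m`. -/
def LipschitzQ (m : ℚ) (α : X) : Prop :=
  ∀ s t : dyadicI, |α s - α t| ≤ m * |s.1 - t.1|

/-- The point `2^{-n}` of `I`. -/
def invPow (n : ℕ) : dyadicI :=
  ⟨1 / 2 ^ n, by simpa using dyadicI_mem (i := 1) (n := n) Nat.one_le_two_pow⟩

/-- `μ` is the Hilbert–Kunz multiplicity of `α`, i.e. `μ = lim 2^n α(2^{-n})`. -/
def IsHKmu (α : X) (μ : ℝ) : Prop :=
  Filter.Tendsto (fun n : ℕ => ((2 ^ n * α (invPow n) : ℚ) : ℝ)) Filter.atTop (nhds μ)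

/-- The series `S_α = Σ α(2^{-n}) (2w)^n = Σ (2^n α(2^{-n})) w^n`. -/
def hkSeries (α : X) : PowerSeries ℚ := PowerSeries.mk fun n => 2 ^ n * α (invPow n)

/-- Auxiliary recursion defining the functions `φ_m`. -/
def phiAux : ℕ → ℕ → ℚ → ℚ
  | 0, _, _ => 0
  | n + 1, m, t =>
      if t ≤ 1 / 2 then
        if m % 2 = 0 then (phiAux n (m + 1) (2 * t) + (8 * (m : ℚ) + 6) * t) / 8
        else (phiAux n (m - 1) (2 * t) + ((2 * t) - (2 * t) ^ 2) + (8 * (m : ℚ) + 6) * t) / 8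
      else
        if m = 0 then (phiAux n 0 (2 * t - 1) + 6 * (1 - t)) / 8
        else if m % 2 = 0 then
          (phiAux n (m - 1) (2 * t - 1) + ((2 * t - 1) - (2 * t - 1) ^ 2)
            + (8 * (m : ℚ) + 6) * (1 - t)) / 8
        else (phiAux n (m + 1) (2 * t - 1) + (8 * (m : ℚ) + 6) * (1 - t)) / 8

/-- The functions `φ_m ∈ X` of Definition 2.2. -/
def phiM (m : ℕ) : X := fun t => phiAux (padicValNat 2 t.1.den) m t.1

/-- `ℕ` with the Nim-sum (bitwise XOR) as its (commutative) monoid operation. -/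
def NimNat : Type := ℕ

instance : CommMonoid NimNat where
  mul a b := Nat.xor a b
  one := (0 : ℕ)
  mul_assoc := Nat.xor_assoc
  mul_comm := Nat.xor_comm
  one_mul := Nat.zero_xor
  mul_one := Nat.xor_zero

/-- The ring `Γ`: free `ℤ`-module on `λ₀, λ₁, …` with `λᵢλⱼ = λ_{i XOR j}`. -/
abbrev GammaZ : Type := MonoidAlgebra ℤ NimNat

/-- The ring `Γ_Q = Γ ⊗ ℚ`. -/
abbrev GammaQ : Type := MonoidAlgebra ℚ NimNat

/-- The basis element `λᵢ` of `Γ`. -/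
def lamZ (i : ℕ) : GammaZ := MonoidAlgebra.single (show NimNat from i) 1

/-- The basis element `λᵢ` of `Γ_Q`. -/
def lamQ (i : ℕ) : GammaQ := MonoidAlgebra.single (show NimNat from i) 1

/-- `δ_r = λ₀ − λ₁ + ⋯ + (−1)^{r−1} λ_{r−1}` in `Γ`. -/
def deltaZ (r : ℕ) : GammaZ := ∑ i ∈ Finset.range r, ((-1 : ℤ) ^ i) • lamZ i

/-- `δ_r` in `Γ_Q`. -/
def deltaQ (r : ℕ) : GammaQ := ∑ i ∈ Finset.range r, ((-1 : ℚ) ^ i) • lamQ i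

/-- `L_n(α) = Σ_{i=0}^{2^n−1} (α((i+1)/2^n) − α(i/2^n)) (−1)^i λᵢ ∈ Γ_Q`. -/
def Ln (n : ℕ) (α : X) : GammaQ :=
  ∑ i ∈ Finset.range (2 ^ n),
    ((-1 : ℚ) ^ i * (evI α (((i : ℚ) + 1) / 2 ^ n) - evI α ((i : ℚ) / 2 ^ n))) • lamQ i

/-- The Hilbert–Kunz function `φ_f ∈ X` of a power series `f`:
`φ_f(i/q) = q^{-r} · dim_F F[[u₁,…,u_r]]/(u₁^q,…,u_r^q,f^i)`. -/
def phiF {F : Type} [Field F] {σ : Type} (f : MvPowerSeries σ F) : X := fun t =>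
  ((Module.finrank F
      (MvPowerSeries σ F ⧸ Ideal.span
        (Set.range (fun j : σ => (MvPowerSeries.X j : MvPowerSeries σ F) ^ t.1.den)
          ∪ {f ^ t.1.num.toNat}))) : ℚ)
    / (t.1.den : ℚ) ^ (Nat.card σ)

/-- The natural inclusion `F[[u_j : j ∈ σ]] → F[[u_j : j ∈ τ]]` along an injection `e : σ → τ`. -/
def embPS {F : Type} [Field F] {σ τ : Type} (e : σ → τ) (f : MvPowerSeries σ F) :
    MvPowerSeries τ F := fun d =>
  if h : ∃ d' : σ →₀ ℕ, Finsupp.mapDomain e d' = d then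
    MvPowerSeries.coeff h.choose f
  else 0


/-! ### Auxiliary development for statement9 -/

section Aux9

lemma div2_mem_dyadicI {t : ℚ} (ht : t ∈ dyadicI) : t / 2 ∈ dyadicI := by
  obtain ⟨h0, h1, i, n, rfl⟩ := ht
  refine ⟨by positivity, by linarith, i, n + 1, ?_⟩
  rw [pow_succ]; ring

lemma halfup_mem_dyadicI {t : ℚ} (ht : t ∈ dyadicI) : (1 + t) / 2 ∈ dyadicI := by
  obtain ⟨h0, h1, i, n, rfl⟩ := ht
  refine ⟨by positivity, by linarith, 2 ^ n + i, n + 1, ?_⟩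
  have h2 : ((2 : ℚ) ^ n) ≠ 0 := by positivity
  push_cast
  rw [pow_succ, div_eq_div_iff (by positivity) (by positivity)]
  field_simp

lemma evI_add (α β : X) (t : ℚ) : evI (α + β) t = evI α t + evI β t := by
  unfold evI; split <;> simp

lemma evI_smul (a : ℚ) (α : X) (t : ℚ) : evI (a • α) t = a * evI α t := by
  unfold evI; split <;> simp

lemma T0_add (α β : X) : T0 (α + β) = T0 α + T0 β := by
  funext t; simp [T0, evI_add]

lemma T1_add (α β : X) : T1 (α + β) = T1 α + T1 β := by
  funext t; simp [T1, evI_add]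

lemma T0_smul (a : ℚ) (α : X) : T0 (a • α) = a • T0 α := by
  funext t; simp [T0, evI_smul]

lemma T1_smul (a : ℚ) (α : X) : T1 (a • α) = a • T1 α := by
  funext t; simp [T1, evI_smul]

lemma T0_one : T0 oneX = oneX := by
  funext t
  simp [T0, oneX, evI, div2_mem_dyadicI t.2]

lemma T1_one : T1 oneX = oneX := by
  funext t
  simp [T1, oneX, evI, halfup_mem_dyadicI t.2]

lemma evI_oneX (t : ℚ) (h : t ∈ dyadicI) : evI oneX t = 1 := by
  simp [evI, h, oneX]

lemma hashAux_add_left (n : ℕ) : ∀ (α β γ : X) (t : ℚ),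
    hashAux n (α + β) γ t = hashAux n α γ t + hashAux n β γ t := by
  induction n with
  | zero => intro α β γ t; simp [hashAux, evI_add]; split <;> ring
  | succ n ih =>
      intro α β γ t
      simp only [hashAux, T0_add, T1_add, ih]
      split <;> ring

lemma hashAux_add_right (n : ℕ) : ∀ (α β γ : X) (t : ℚ),
    hashAux n α (β + γ) t = hashAux n α β t + hashAux n α γ t := by
  induction n with
  | zero => intro α β γ t; simp [hashAux, evI_add]; split <;> ring
  | succ n ih =>
      intro α β γ t
      simp only [hashAux, T0_add, T1_add, ih]
      split <;> ring

lemma hashAux_smul_left (n : ℕ) : ∀ (a : ℚ) (α γ : X) (t : ℚ),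
    hashAux n (a • α) γ t = a * hashAux n α γ t := by
  induction n with
  | zero => intro a α γ t; simp [hashAux, evI_smul]; split <;> ring
  | succ n ih =>
      intro a α γ t
      simp only [hashAux, T0_smul, T1_smul, ih]
      split <;> ring

lemma hashAux_smul_right (n : ℕ) : ∀ (a : ℚ) (α γ : X) (t : ℚ),
    hashAux n α (a • γ) t = a * hashAux n α γ t := by
  induction n with
  | zero => intro a α γ t; simp [hashAux, evI_smul]; split <;> ring
  | succ n ih =>
      intro a α γ t
      simp only [hashAux, T0_smul, T1_smul, ih]
      split <;> ring

lemma hashAux_one_left (n : ℕ) : ∀ (β : X) (t : ℚ), hashAux n oneX β t = 0 := by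
  induction n with
  | zero =>
      intro β t
      simp [hashAux, evI_oneX 1 one_mem_dyadicI, evI_oneX 0 zero_mem_dyadicI]
  | succ n ih =>
      intro β t
      simp only [hashAux, T0_one, T1_one, ih]
      split <;> ring

lemma hashAux_one_right (n : ℕ) : ∀ (α : X) (t : ℚ), hashAux n α oneX t = 0 := by
  induction n with
  | zero =>
      intro α t
      simp [hashAux, evI_oneX 1 one_mem_dyadicI, evI_oneX 0 zero_mem_dyadicI]
  | succ n ih =>
      intro α t
      simp only [hashAux, T0_one, T1_one, ih]
      split <;> ring

lemma phiAux_zero (n : ℕ) : ∀ m, phiAux n m 0 = 0 := by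
  induction n with
  | zero => intro m; rfl
  | succ n ih => intro m; by_cases h : m % 2 = 0 <;> norm_num [phiAux, h, ih]

lemma phiAux_one (n : ℕ) : ∀ m, phiAux n m 1 = 0 := by
  induction n with
  | zero => intro m; rfl
  | succ n ih =>
      intro m
      by_cases h0 : m = 0
      · norm_num [phiAux, h0, ih]
      · by_cases h : m % 2 = 0 <;> norm_num [phiAux, h0, h, ih]

lemma dyadic_den {t : ℚ} (ht : t ∈ dyadicI) : ∃ k, t.den = 2 ^ k := by
  obtain ⟨h0, h1, i, n, rfl⟩ := ht
  have hd : ((Rat.divInt (i : ℤ) ((2 : ℤ) ^ n)).den : ℤ) ∣ (2 : ℤ) ^ n := Rat.den_dvd _ _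
  rw [Rat.divInt_eq_div] at hd
  have heq : (((i : ℤ) : ℚ) / (((2 : ℤ) ^ n : ℤ) : ℚ)) = ((i : ℚ) / 2 ^ n) := by push_cast; ring
  rw [heq] at hd
  have hd' : ((i : ℚ) / 2 ^ n).den ∣ 2 ^ n := by exact_mod_cast hd
  exact (Nat.dvd_prime_pow Nat.prime_two).mp hd' |>.imp fun k hk => hk.2

lemma num_odd_of_ne_zero {t : ℚ} (ht : t ∈ dyadicI) (h0 : t ≠ 0) : Odd t.num.natAbs := by
  obtain ⟨k, hk⟩ := dyadic_den ht
  cases k with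
  | zero =>
      have hden : t.den = 1 := by simpa using hk
      have ht' : t = (t.num : ℚ) := by
        conv_lhs => rw [← Rat.num_div_den t]
        rw [hden]; simp
      have h0' : 0 ≤ t.num := Rat.num_nonneg.mpr ht.1
      have h1' : t.num ≤ 1 := by
        have := ht.2.1
        rw [ht'] at this
        exact_mod_cast this
      have : t.num = 1 := by
        rcases lt_or_eq_of_le h0' with h | h
        · omega
        · exfalso; apply h0; rw [ht', ← h]; simp
      rw [this]; norm_num
  | succ k =>
      have h2 : 2 ∣ t.den := by rw [hk]; exact ⟨2 ^ k, by ring⟩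
      have hcop : Nat.Coprime t.num.natAbs 2 := Nat.Coprime.coprime_dvd_right h2 t.reduced
      rw [Nat.odd_iff]
      have hnd : ¬ 2 ∣ t.num.natAbs := (Nat.Prime.coprime_iff_not_dvd Nat.prime_two).mp hcop.symm
      omega

lemma den_div2 {t : ℚ} (ht : t ∈ dyadicI) (h0 : t ≠ 0) : (t / 2).den = 2 * t.den := by
  have hodd : Odd t.num.natAbs := num_odd_of_ne_zero ht h0
  have hcop : Nat.Coprime t.num.natAbs (2 * t.den) := by
    refine Nat.Coprime.mul_right ?_ t.reduced
    rw [Nat.coprime_comm]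
    rw [Nat.Prime.coprime_iff_not_dvd Nat.prime_two]
    rw [Nat.odd_iff] at hodd
    omega
  have hq : t / 2 = (⟨t.num, 2 * t.den, by simp [t.den_nz], hcop⟩ : ℚ) := by
    have h1 : ((⟨t.num, 2 * t.den, by simp [t.den_nz], hcop⟩ : ℚ)) =
        (t.num : ℚ) / ((2 * t.den : ℕ) : ℚ) := by
      exact_mod_cast (Rat.num_div_den _).symm
    rw [h1]
    conv_lhs => rw [← Rat.num_div_den t]
    have : ((t.den : ℚ)) ≠ 0 := by exact_mod_cast t.den_nz
    push_cast
    field_simp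
  rw [hq]

lemma den_halfup {t : ℚ} (ht : t ∈ dyadicI) (h1 : t ≠ 1) : ((1 + t) / 2).den = 2 * t.den := by
  have hnum0 : 0 ≤ t.num := Rat.num_nonneg.mpr ht.1
  set a : ℕ := t.num.toNat with ha
  have hna : t.num = (a : ℤ) := by omega
  have hsum_odd : Odd (t.den + a) := by
    by_cases h0 : t = 0
    · subst h0; simp [ha]
    · obtain ⟨k, hk⟩ := dyadic_den ht
      have hodd : Odd t.num.natAbs := num_odd_of_ne_zero ht h0
      have haodd : Odd a := by
        have : t.num.natAbs = a := by omega
        rwa [this] at hodd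
      cases k with
      | zero =>
          exfalso
          have hden : t.den = 1 := by simpa using hk
          have ht' : t = (t.num : ℚ) := by
            conv_lhs => rw [← Rat.num_div_den t]
            rw [hden]; simp
          have hle : t.num ≤ 1 := by
            have := ht.2.1; rw [ht'] at this; exact_mod_cast this
          have hge : 1 ≤ t.num := by
            rcases lt_or_eq_of_le hnum0 with h | h
            · omega
            · exact absurd (by rw [ht', ← h]; simp) h0
          apply h1
          rw [ht']
          have : t.num = 1 := le_antisymm hle hge
          rw [this]; norm_num
      | succ k =>
          have h2 : 2 ∣ t.den := by rw [hk]; exact ⟨2 ^ k, by ring⟩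
          rw [Nat.odd_iff] at haodd ⊢
          omega
  have hcop : Nat.Coprime ((t.den : ℤ) + t.num).natAbs (2 * t.den) := by
    have habs : ((t.den : ℤ) + t.num).natAbs = t.den + a := by omega
    rw [habs]
    refine Nat.Coprime.mul_right ?_ ?_
    · rw [Nat.coprime_comm, Nat.Prime.coprime_iff_not_dvd Nat.prime_two]
      rw [Nat.odd_iff] at hsum_odd
      omega
    · have : Nat.Coprime a t.den := by
        have : t.num.natAbs = a := by omega
        rw [← this]; exact t.reduced
      simpa [Nat.add_comm] using (Nat.coprime_add_self_left (m := a) (n := t.den)).mpr this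
  have hq : (1 + t) / 2 = (⟨(t.den : ℤ) + t.num, 2 * t.den, by simp [t.den_nz], hcop⟩ : ℚ) := by
    have h2 : ((⟨(t.den : ℤ) + t.num, 2 * t.den, by simp [t.den_nz], hcop⟩ : ℚ)) =
        (((t.den : ℤ) + t.num : ℤ) : ℚ) / ((2 * t.den : ℕ) : ℚ) := by
      exact_mod_cast (Rat.num_div_den _).symm
    rw [h2]
    conv_lhs => rw [← Rat.num_div_den t]
    have : ((t.den : ℚ)) ≠ 0 := by exact_mod_cast t.den_nz
    push_cast
    field_simp
  rw [hq]

lemma evI_mem (α : X) {t : ℚ} (h : t ∈ dyadicI) : evI α t = α ⟨t, h⟩ := dif_pos h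

lemma v2_den_div2 {t : ℚ} (ht : t ∈ dyadicI) (h0 : t ≠ 0) :
    padicValNat 2 (t / 2).den = padicValNat 2 t.den + 1 := by
  haveI : Fact (Nat.Prime 2) := ⟨Nat.prime_two⟩
  rw [den_div2 ht h0, padicValNat.mul (p := 2) two_ne_zero t.den_nz,
    padicValNat.self (by norm_num), add_comm]

lemma v2_den_halfup {t : ℚ} (ht : t ∈ dyadicI) (h1 : t ≠ 1) :
    padicValNat 2 ((1 + t) / 2).den = padicValNat 2 t.den + 1 := by
  haveI : Fact (Nat.Prime 2) := ⟨Nat.prime_two⟩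
  rw [den_halfup ht h1, padicValNat.mul (p := 2) two_ne_zero t.den_nz,
    padicValNat.self (by norm_num), add_comm]

lemma T0_tId : T0 tId = (1/2 : ℚ) • tId := by
  funext t
  rw [show T0 tId t = evI tId (t.1 / 2) from rfl, evI_mem _ (div2_mem_dyadicI t.2)]
  show t.1 / 2 = (1/2 : ℚ) * t.1
  ring

lemma T1_tId : T1 tId = (1/2 : ℚ) • tId + (1/2 : ℚ) • oneX := by
  funext t
  rw [show T1 tId t = evI tId ((1 + t.1) / 2) from rfl, evI_mem _ (halfup_mem_dyadicI t.2)]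
  show (1 + t.1) / 2 = (1/2 : ℚ) * t.1 + (1/2 : ℚ) * 1
  ring

lemma T0_eps : T0 epsX = (1/4 : ℚ) • epsX + (1/4 : ℚ) • tId := by
  funext t
  rw [show T0 epsX t = evI epsX (t.1 / 2) from rfl, evI_mem _ (div2_mem_dyadicI t.2)]
  show t.1/2 - (t.1/2)^2 = (1/4 : ℚ) * (t.1 - t.1^2) + (1/4 : ℚ) * t.1
  ring

lemma T1_eps : T1 epsX = (1/4 : ℚ) • epsX + (-(1/4) : ℚ) • tId + (1/4 : ℚ) • oneX := by
  funext t
  rw [show T1 epsX t = evI epsX ((1 + t.1) / 2) from rfl, evI_mem _ (halfup_mem_dyadicI t.2)]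
  show (1+t.1)/2 - ((1+t.1)/2)^2 = (1/4 : ℚ) * (t.1 - t.1^2) + (-(1/4) : ℚ) * t.1 + (1/4 : ℚ) * 1
  ring

lemma evI_phiM_div2 (m : ℕ) {t : ℚ} (ht : t ∈ dyadicI) :
    evI (phiM m) (t / 2) = phiAux (padicValNat 2 t.den + 1) m (t / 2) := by
  rw [evI_mem _ (div2_mem_dyadicI ht)]
  show phiAux (padicValNat 2 (t / 2).den) m (t / 2) = _
  by_cases h0 : t = 0
  · subst h0; norm_num [phiAux_zero]
  · rw [v2_den_div2 ht h0]

lemma evI_phiM_halfup (m : ℕ) {t : ℚ} (ht : t ∈ dyadicI) :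
    evI (phiM m) ((1 + t) / 2) = phiAux (padicValNat 2 t.den + 1) m ((1 + t) / 2) := by
  rw [evI_mem _ (halfup_mem_dyadicI ht)]
  show phiAux (padicValNat 2 ((1 + t) / 2).den) m ((1 + t) / 2) = _
  by_cases h1 : t = 1
  · subst h1; norm_num [phiAux_one]
  · rw [v2_den_halfup ht h1]

lemma phiAux_succ (n m : ℕ) (t : ℚ) : phiAux (n + 1) m t =
    if t ≤ 1 / 2 then
      (if m % 2 = 0 then
        (phiAux n (m + 1) (2 * t) + (8 * (m : ℚ) + 6) * t) / 8
      else (phiAux n (m - 1) (2 * t) + ((2 * t) - (2 * t) ^ 2) + (8 * (m : ℚ) + 6) * t) / 8)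
    else
      (if m = 0 then (phiAux n 0 (2 * t - 1) + 6 * (1 - t)) / 8
      else if m % 2 = 0 then
        (phiAux n (m - 1) (2 * t - 1) + ((2 * t - 1) - (2 * t - 1) ^ 2)
          + (8 * (m : ℚ) + 6) * (1 - t)) / 8
      else (phiAux n (m + 1) (2 * t - 1) + (8 * (m : ℚ) + 6) * (1 - t)) / 8) := rfl

lemma T0_phiM_even (k : ℕ) :
    T0 (phiM (2 * k)) = (1/8 : ℚ) • phiM (2 * k + 1) + ((8 * k + 3) / 8 : ℚ) • tId := by
  funext t
  obtain ⟨t, ht⟩ := t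
  rw [show T0 (phiM (2 * k)) ⟨t, ht⟩ = evI (phiM (2 * k)) (t / 2) from rfl,
    evI_phiM_div2 _ ht]
  have hle : t / 2 ≤ 1 / 2 := by linarith [ht.2.1]
  show phiAux (padicValNat 2 t.den + 1) (2 * k) (t / 2)
    = (1/8 : ℚ) * phiAux (padicValNat 2 t.den) (2 * k + 1) t + ((8 * k + 3) / 8 : ℚ) * t
  rw [phiAux_succ, if_pos hle, if_pos (show (2 * k) % 2 = 0 by omega),
    show 2 * (t / 2) = t by ring]
  push_cast
  ring

lemma T0_phiM_odd (k : ℕ) :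
    T0 (phiM (2 * k + 1)) = (1/8 : ℚ) • phiM (2 * k) + (1/8 : ℚ) • epsX
      + ((8 * k + 7) / 8 : ℚ) • tId := by
  funext t
  obtain ⟨t, ht⟩ := t
  rw [show T0 (phiM (2 * k + 1)) ⟨t, ht⟩ = evI (phiM (2 * k + 1)) (t / 2) from rfl,
    evI_phiM_div2 _ ht]
  have hle : t / 2 ≤ 1 / 2 := by linarith [ht.2.1]
  show phiAux (padicValNat 2 t.den + 1) (2 * k + 1) (t / 2)
    = (1/8 : ℚ) * phiAux (padicValNat 2 t.den) (2 * k) t + (1/8 : ℚ) * (t - t ^ 2)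
      + ((8 * k + 7) / 8 : ℚ) * t
  rw [phiAux_succ, if_pos hle, if_neg (show ¬ (2 * k + 1) % 2 = 0 by omega),
    show 2 * (t / 2) = t by ring, show 2 * k + 1 - 1 = 2 * k from rfl]
  push_cast
  ring

lemma T1_phiM_zero :
    T1 (phiM 0) = (1/8 : ℚ) • phiM 0 + (3/8 : ℚ) • oneX + (-(3/8) : ℚ) • tId := by
  funext t
  obtain ⟨t, ht⟩ := t
  rw [show T1 (phiM 0) ⟨t, ht⟩ = evI (phiM 0) ((1 + t) / 2) from rfl,
    evI_phiM_halfup _ ht]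
  show phiAux (padicValNat 2 t.den + 1) 0 ((1 + t) / 2)
    = (1/8 : ℚ) * phiAux (padicValNat 2 t.den) 0 t + (3/8 : ℚ) * 1 + (-(3/8) : ℚ) * t
  by_cases h0 : t = 0
  · subst h0
    norm_num [phiAux_succ, phiAux_one, phiAux_zero]
  · have hgt : ¬ ((1 + t) / 2 ≤ 1 / 2) := by
      have : 0 < t := lt_of_le_of_ne ht.1 (Ne.symm h0)
      intro h; linarith
    rw [phiAux_succ, if_neg hgt, if_pos rfl, show 2 * ((1 + t) / 2) - 1 = t by ring]
    ring

lemma T1_phiM_even (k : ℕ) :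
    T1 (phiM (2 * k + 2)) = (1/8 : ℚ) • phiM (2 * k + 1) + (1/8 : ℚ) • epsX
      + ((8 * k + 11) / 8 : ℚ) • oneX + (-((8 * k + 11) / 8) : ℚ) • tId := by
  funext t
  obtain ⟨t, ht⟩ := t
  rw [show T1 (phiM (2 * k + 2)) ⟨t, ht⟩ = evI (phiM (2 * k + 2)) ((1 + t) / 2) from rfl,
    evI_phiM_halfup _ ht]
  show phiAux (padicValNat 2 t.den + 1) (2 * k + 2) ((1 + t) / 2)
    = (1/8 : ℚ) * phiAux (padicValNat 2 t.den) (2 * k + 1) t + (1/8 : ℚ) * (t - t ^ 2)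
      + ((8 * k + 11) / 8 : ℚ) * 1 + (-((8 * k + 11) / 8) : ℚ) * t
  by_cases h0 : t = 0
  · subst h0
    rw [show padicValNat 2 (0 : ℚ).den = 0 by norm_num [Rat.den_ofNat]]
    rw [phiAux_succ]
    norm_num
    rw [show phiAux 0 (2 * k + 2 + 1) (1 : ℚ) = 0 from rfl,
      show phiAux 0 (2 * k + 1) (0 : ℚ) = 0 from rfl]
    push_cast
    ring
  · have hgt : ¬ ((1 + t) / 2 ≤ 1 / 2) := by
      have : 0 < t := lt_of_le_of_ne ht.1 (Ne.symm h0)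
      intro h; linarith
    rw [phiAux_succ, if_neg hgt, if_neg (show ¬ (2 * k + 2) = 0 by omega),
      if_pos (show (2 * k + 2) % 2 = 0 by omega),
      show 2 * ((1 + t) / 2) - 1 = t by ring, show 2 * k + 2 - 1 = 2 * k + 1 from rfl]
    push_cast
    ring

lemma T1_phiM_odd (k : ℕ) :
    T1 (phiM (2 * k + 1)) = (1/8 : ℚ) • phiM (2 * k + 2)
      + ((8 * k + 7) / 8 : ℚ) • oneX + (-((8 * k + 7) / 8) : ℚ) • tId := by
  funext t
  obtain ⟨t, ht⟩ := t
  rw [show T1 (phiM (2 * k + 1)) ⟨t, ht⟩ = evI (phiM (2 * k + 1)) ((1 + t) / 2) from rfl,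
    evI_phiM_halfup _ ht]
  show phiAux (padicValNat 2 t.den + 1) (2 * k + 1) ((1 + t) / 2)
    = (1/8 : ℚ) * phiAux (padicValNat 2 t.den) (2 * k + 2) t
      + ((8 * k + 7) / 8 : ℚ) * 1 + (-((8 * k + 7) / 8) : ℚ) * t
  by_cases h0 : t = 0
  · subst h0
    rw [show padicValNat 2 (0 : ℚ).den = 0 by norm_num [Rat.den_ofNat]]
    rw [phiAux_succ, if_pos (show ((1 + (0:ℚ)) / 2 ≤ 1 / 2) by norm_num),
      if_neg (show ¬ (2 * k + 1) % 2 = 0 by omega),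
      show 2 * k + 1 - 1 = 2 * k from rfl,
      show 2 * ((1 + (0:ℚ)) / 2) = 1 by norm_num,
      show phiAux 0 (2 * k) (1 : ℚ) = 0 from rfl,
      show phiAux 0 (2 * k + 2) (0 : ℚ) = 0 from rfl]
    push_cast
    ring
  · have hgt : ¬ ((1 + t) / 2 ≤ 1 / 2) := by
      have : 0 < t := lt_of_le_of_ne ht.1 (Ne.symm h0)
      intro h; linarith
    rw [phiAux_succ, if_neg hgt, if_neg (show ¬ (2 * k + 1) = 0 by omega),
      if_neg (show ¬ (2 * k + 1) % 2 = 0 by omega),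
      show 2 * ((1 + t) / 2) - 1 = t by ring]
    push_cast
    ring

/-- The sequence `P_n = (ε # ε)(2^{-n})`. -/
def Pq : ℕ → ℚ
  | 0 => 0
  | n + 1 => (Pq n + (1/2 : ℚ) ^ n) / 8

/-- The sequences `S_{m,n} = (ε # φ_m)(2^{-n})`. -/
def Sq : ℕ → ℕ → ℚ
  | 0, _ => 0
  | n + 1, 0 => (Sq n 0 + Sq n 1 + 6 * (1/2 : ℚ) ^ n) / 32
  | n + 1, m + 1 =>
      (Sq n m + Sq n (m + 2) + Pq n + 2 * (4 * ((m : ℚ) + 1) + 3) * (1/2 : ℚ) ^ n) / 32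

/-- `hA n α β = (α # β)(2^{-n})` (with the depth-`n` recursion). -/
def hA (n : ℕ) (α β : X) : ℚ := hashAux n α β ((1/2 : ℚ) ^ n)

lemma hashAux_succ (n : ℕ) (α β : X) (t : ℚ) : hashAux (n + 1) α β t =
    if t ≤ 1 / 2 then
      hashAux n (T0 α) (T0 β) (2 * t) + hashAux n (T1 α) (T1 β) (2 * t)
    else
      hashAux n (T0 α) (T0 β) 1 + hashAux n (T1 α) (T1 β) 1 +
        hashAux n (T0 α) (T1 β) (2 * t - 1) + hashAux n (T1 α) (T0 β) (2 * t - 1) := rfl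

lemma hA_step (n : ℕ) (α β : X) :
    hA (n + 1) α β = hA n (T0 α) (T0 β) + hA n (T1 α) (T1 β) := by
  unfold hA
  have h1 : ((1/2 : ℚ)) ^ (n + 1) ≤ 1 / 2 := by
    calc ((1/2 : ℚ)) ^ (n + 1) ≤ (1/2 : ℚ) ^ 1 :=
          pow_le_pow_of_le_one (by norm_num) (by norm_num) (by omega)
    _ = 1 / 2 := pow_one _
  rw [hashAux_succ, if_pos h1, show 2 * (1/2 : ℚ) ^ (n + 1) = (1/2 : ℚ) ^ n by
    rw [pow_succ]; ring]

lemma evI_epsX_one : evI epsX 1 = 0 := by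
  rw [evI_mem _ one_mem_dyadicI]; show (1 : ℚ) - 1 ^ 2 = 0; norm_num

lemma evI_epsX_zero : evI epsX 0 = 0 := by
  rw [evI_mem _ zero_mem_dyadicI]; show (0 : ℚ) - 0 ^ 2 = 0; norm_num

lemma evI_tId_one : evI tId 1 = 1 := by
  rw [evI_mem _ one_mem_dyadicI]; rfl

lemma evI_tId_zero : evI tId 0 = 0 := by
  rw [evI_mem _ zero_mem_dyadicI]; rfl

lemma evI_phiM_one (m : ℕ) : evI (phiM m) 1 = 0 := by
  rw [evI_mem _ one_mem_dyadicI]; exact phiAux_one _ m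

lemma evI_phiM_zero (m : ℕ) : evI (phiM m) 0 = 0 := by
  rw [evI_mem _ zero_mem_dyadicI]; exact phiAux_zero _ m

lemma hA_zero (α β : X) :
    hA 0 α β = (evI α 1 - evI α 0) * (evI β 1 - evI β 0) := by
  unfold hA
  rw [pow_zero]
  show (if (1 : ℚ) = 0 then 0 else (evI α 1 - evI α 0) * (evI β 1 - evI β 0)) = _
  rw [if_neg one_ne_zero]

lemma main_ind (n : ℕ) :
    hA n epsX epsX = Pq n ∧ hA n epsX tId = 0 ∧ hA n tId epsX = 0 ∧
    hA n tId tId = (1/2 : ℚ) ^ n ∧ (∀ m, hA n tId (phiM m) = 0) ∧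
    (∀ m, hA n epsX (phiM m) = Sq n m) := by
  induction n with
  | zero =>
      refine ⟨?_, ?_, ?_, ?_, fun m => ?_, fun m => ?_⟩ <;>
        simp [hA_zero, evI_epsX_one, evI_epsX_zero, evI_tId_one, evI_tId_zero,
          evI_phiM_one, evI_phiM_zero, Pq, Sq]
  | succ n ih =>
      obtain ⟨hPP, hPQ, hQP, hRR, hU, hS⟩ := ih
      simp only [hA] at hPP hPQ hQP hRR hU hS
      refine ⟨?_, ?_, ?_, ?_, fun m => ?_, fun m => ?_⟩
      · -- ε # ε
        rw [hA_step, T0_eps, T1_eps]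
        simp only [hA, hashAux_add_left, hashAux_add_right, hashAux_smul_left,
          hashAux_smul_right, hashAux_one_left, hashAux_one_right,
          hPP, hPQ, hQP, hRR]
        show _ = Pq (n + 1)
        rw [show Pq (n + 1) = (Pq n + (1/2 : ℚ) ^ n) / 8 from rfl]
        ring
      · -- ε # id
        rw [hA_step, T0_eps, T1_eps, T0_tId, T1_tId]
        simp only [hA, hashAux_add_left, hashAux_add_right, hashAux_smul_left,
          hashAux_smul_right, hashAux_one_left, hashAux_one_right,
          hPP, hPQ, hQP, hRR]
        ring
      · -- id # ε
        rw [hA_step, T0_eps, T1_eps, T0_tId, T1_tId]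
        simp only [hA, hashAux_add_left, hashAux_add_right, hashAux_smul_left,
          hashAux_smul_right, hashAux_one_left, hashAux_one_right,
          hPP, hPQ, hQP, hRR]
        ring
      · -- id # id
        rw [hA_step, T0_tId, T1_tId]
        simp only [hA, hashAux_add_left, hashAux_add_right, hashAux_smul_left,
          hashAux_smul_right, hashAux_one_left, hashAux_one_right, hRR]
        rw [pow_succ]
        ring
      · -- id # φ_m
        rcases Nat.even_or_odd m with ⟨k, hk⟩ | ⟨k, hk⟩
        · subst hk
          rcases Nat.eq_zero_or_pos k with rfl | hkpos
          · -- m = 0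
            rw [show (0 + 0 : ℕ) = 2 * 0 by omega]
            rw [hA_step, T0_tId, T1_tId, T0_phiM_even 0, T1_phiM_zero]
            simp only [hA, hashAux_add_left, hashAux_add_right, hashAux_smul_left,
              hashAux_smul_right, hashAux_one_left, hashAux_one_right, hRR, hU]
            ring
          · obtain ⟨j, hj⟩ : ∃ j, k = j + 1 := ⟨k - 1, by omega⟩
            subst hj
            rw [show (j + 1) + (j + 1) = 2 * j + 2 by omega]
            rw [hA_step, T0_tId, T1_tId,
              show (2 * j + 2 : ℕ) = 2 * (j + 1) by omega, T0_phiM_even (j + 1),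
              show (2 * (j + 1) : ℕ) = (2 * j + 1) + 1 by omega,
              show ((2 * j + 1) + 1 : ℕ) = 2 * j + 2 by omega, T1_phiM_even j]
            simp only [hA, hashAux_add_left, hashAux_add_right, hashAux_smul_left,
              hashAux_smul_right, hashAux_one_left, hashAux_one_right, hRR, hU,
              hPQ, hQP]
            push_cast
            ring
        · subst hk
          rw [show 2 * k + 1 = 2 * k + 1 from rfl]
          rw [hA_step, T0_tId, T1_tId, T0_phiM_odd k, T1_phiM_odd k]
          simp only [hA, hashAux_add_left, hashAux_add_right, hashAux_smul_left,
            hashAux_smul_right, hashAux_one_left, hashAux_one_right, hRR, hU,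
            hPQ, hQP]
          ring
      · -- ε # φ_m
        rcases Nat.even_or_odd m with ⟨k, hk⟩ | ⟨k, hk⟩
        · subst hk
          rcases Nat.eq_zero_or_pos k with rfl | hkpos
          · -- m = 0
            rw [show (0 + 0 : ℕ) = 2 * 0 by omega]
            rw [hA_step, T0_phiM_even 0, T1_phiM_zero, T0_eps, T1_eps]
            simp only [hA, hashAux_add_left, hashAux_add_right, hashAux_smul_left,
              hashAux_smul_right, hashAux_one_left, hashAux_one_right, hRR, hU,
              hPQ, hQP, hPP, hS]
            rw [show (2 * 0 : ℕ) = 0 by omega,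
              show Sq (n + 1) 0 = (Sq n 0 + Sq n 1 + 6 * (1/2 : ℚ) ^ n) / 32 from rfl,
              show (2 * 0 + 1 : ℕ) = 1 by omega]
            ring
          · obtain ⟨j, hj⟩ : ∃ j, k = j + 1 := ⟨k - 1, by omega⟩
            subst hj
            rw [show (j + 1) + (j + 1) = 2 * j + 2 by omega]
            rw [hA_step, T0_eps, T1_eps,
              show (2 * j + 2 : ℕ) = 2 * (j + 1) by omega, T0_phiM_even (j + 1),
              show (2 * (j + 1) : ℕ) = 2 * j + 2 by omega, T1_phiM_even j]
            simp only [hA, hashAux_add_left, hashAux_add_right, hashAux_smul_left,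
              hashAux_smul_right, hashAux_one_left, hashAux_one_right, hRR, hU,
              hPQ, hQP, hPP, hS]
            rw [show (2 * j + 2 : ℕ) = (2 * j + 1) + 1 by omega,
              show Sq (n + 1) ((2 * j + 1) + 1)
                = (Sq n (2 * j + 1) + Sq n ((2 * j + 1) + 2) + Pq n
                    + 2 * (4 * (((2 * j + 1 : ℕ) : ℚ) + 1) + 3) * (1/2 : ℚ) ^ n) / 32
                from rfl,
              show ((2 * j + 1) + 2 : ℕ) = 2 * (j + 1) + 1 by omega]
            push_cast
            ring
        · subst hk
          rw [hA_step, T0_eps, T1_eps, T0_phiM_odd k, T1_phiM_odd k]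
          simp only [hA, hashAux_add_left, hashAux_add_right, hashAux_smul_left,
            hashAux_smul_right, hashAux_one_left, hashAux_one_right, hRR, hU,
            hPQ, hQP, hPP, hS]
          rw [show (2 * k + 1 : ℕ) = (2 * k) + 1 from rfl,
            show Sq (n + 1) ((2 * k) + 1)
              = (Sq n (2 * k) + Sq n ((2 * k) + 2) + Pq n
                  + 2 * (4 * (((2 * k : ℕ) : ℚ) + 1) + 3) * (1/2 : ℚ) ^ n) / 32
              from rfl,
            show ((2 * k) + 2 : ℕ) = 2 * k + 2 from rfl]
          push_cast
          ring

lemma Pq_closed (n : ℕ) : Pq n = ((1/2 : ℚ) ^ n - (1/8 : ℚ) ^ n) / 3 := by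
  induction n with
  | zero => simp [Pq]
  | succ n ih =>
      rw [show Pq (n + 1) = (Pq n + (1/2 : ℚ) ^ n) / 8 from rfl, ih, pow_succ, pow_succ]
      ring

/-- `√7`. -/
def s7 : ℝ := Real.sqrt 7

lemma s7_sq : s7 ^ 2 = 7 := Real.sq_sqrt (by norm_num)

lemma s7_nonneg : 0 ≤ s7 := Real.sqrt_nonneg 7

lemma s7_pos : 0 < s7 := by nlinarith [s7_sq, s7_nonneg]

/-- `r = 8 - 3√7`, the contracting root of `x² - 16x + 1`. -/
def rr : ℝ := 8 - 3 * s7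

/-- `A = 5/(21(7+3√7))`. -/
def AA : ℝ := 5 / (21 * (7 + 3 * s7))

/-- The fixed point `c_m = 4m/7 + 19/42 + A r^m`. -/
def cc (m : ℕ) : ℝ := 4 * m / 7 + 19 / 42 + AA * rr ^ m

lemma rr_pos : 0 < rr := by unfold rr; nlinarith [s7_sq, s7_nonneg]

lemma rr_lt_one : rr < 1 := by unfold rr; nlinarith [s7_sq, s7_nonneg]

lemma denomA_pos : 0 < 21 * (7 + 3 * s7) := by nlinarith [s7_nonneg]

lemma AA_pos : 0 < AA := div_pos (by norm_num) denomA_pos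

lemma AA_le : AA ≤ 5 / 147 := by
  unfold AA
  rw [div_le_div_iff₀ denomA_pos (by norm_num)]
  nlinarith [s7_nonneg]

lemma cc_nonneg (m : ℕ) : 0 ≤ cc m := by
  have h1 : (0 : ℝ) ≤ rr ^ m := le_of_lt (pow_pos rr_pos m)
  have := AA_pos
  unfold cc
  positivity

lemma cc_le (m : ℕ) : cc m ≤ m + 1 := by
  have h1 : rr ^ m ≤ 1 := pow_le_one₀ (le_of_lt rr_pos) (le_of_lt rr_lt_one)
  have h2 : AA * rr ^ m ≤ AA := by nlinarith [AA_pos]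
  have h3 : (0 : ℝ) ≤ (m : ℝ) := Nat.cast_nonneg m
  have := AA_le
  unfold cc
  nlinarith

lemma rr_sqeq : rr ^ 2 = 16 * rr - 1 := by unfold rr; nlinarith [s7_sq]

lemma fp0 : 16 * cc 0 = cc 0 + cc 1 + 6 := by
  have h7 : (7 + 3 * s7) ≠ 0 := by nlinarith [s7_nonneg]
  unfold cc AA rr
  field_simp
  ring

lemma fp1 (m : ℕ) : 16 * cc (m + 1) = cc m + cc (m + 2) + 1/3 + (8 * m + 14) := by
  unfold cc
  rw [show m + 2 = (m + 1) + 1 from rfl, pow_succ, pow_succ]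
  push_cast
  linear_combination (-(AA * rr ^ m)) * rr_sqeq

/-- `f m n = 2^n S_{m,n}` as a real number. -/
def ff (m n : ℕ) : ℝ := 2 ^ n * ((Sq n m : ℚ) : ℝ)

lemma key1 (n : ℕ) : (2 : ℝ) ^ n * (1/2 : ℝ) ^ n = 1 := by
  rw [← mul_pow]; norm_num

lemma key2 (n : ℕ) : (2 : ℝ) ^ n * (1/8 : ℝ) ^ n = (1/4 : ℝ) ^ n := by
  rw [← mul_pow]; norm_num

lemma ffrec0 (n : ℕ) : ff 0 (n + 1) = (ff 0 n + ff 1 n + 6) / 16 := by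
  unfold ff
  rw [show Sq (n + 1) 0 = (Sq n 0 + Sq n 1 + 6 * (1/2 : ℚ) ^ n) / 32 from rfl, pow_succ]
  push_cast
  linear_combination (3/8 : ℝ) * key1 n

lemma ffrec1 (n m : ℕ) : ff (m + 1) (n + 1)
    = (ff m n + ff (m + 2) n + (1/3 - (1/3) * (1/4 : ℝ) ^ n) + (8 * m + 14)) / 16 := by
  unfold ff
  rw [show Sq (n + 1) (m + 1)
      = (Sq n m + Sq n (m + 2) + Pq n + 2 * (4 * ((m : ℚ) + 1) + 3) * (1/2 : ℚ) ^ n) / 32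
      from rfl, Pq_closed, pow_succ]
  push_cast
  linear_combination ((1/48 : ℝ) + ((8 : ℝ) * m + 14) / 16) * key1 n - (1/48 : ℝ) * key2 n

/-- The error term `d_{m,n} = 2^n S_{m,n} - c_m`. -/
def dd (m n : ℕ) : ℝ := ff m n - cc m

lemma ddrec0 (n : ℕ) : dd 0 (n + 1) = (dd 0 n + dd 1 n) / 16 := by
  unfold dd
  rw [ffrec0]
  linear_combination (-(1/16) : ℝ) * fp0

lemma ddrec1 (n m : ℕ) :
    dd (m + 1) (n + 1) = (dd m n + dd (m + 2) n) / 16 - (1/48) * (1/4 : ℝ) ^ n := by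
  unfold dd
  rw [ffrec1]
  linear_combination (-(1/16) : ℝ) * fp1 m

lemma dd_bound : ∀ n m, |dd m n| * 8 ^ n ≤ (m : ℝ) + 2 ^ n + 1 := by
  intro n
  induction n with
  | zero =>
      intro m
      have h : dd m 0 = -cc m := by
        unfold dd ff
        rw [show Sq 0 m = 0 from rfl]
        simp
      rw [h, abs_neg, abs_of_nonneg (cc_nonneg m)]
      have := cc_le m
      norm_num
      linarith
  | succ n ih =>
      intro m
      have h2 : (1 : ℝ) ≤ 2 ^ n := one_le_pow₀ (by norm_num)
      have h8 : (0 : ℝ) < 8 ^ n := by positivity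
      have hps : (8 : ℝ) ^ (n + 1) = 8 * 8 ^ n := by rw [pow_succ]; ring
      have hps2 : (2 : ℝ) ^ (n + 1) = 2 * 2 ^ n := by rw [pow_succ]; ring
      cases m with
      | zero =>
          have h0 := ih 0
          have h1 := ih 1
          have habs : |dd 0 (n + 1)| ≤ (|dd 0 n| + |dd 1 n|) / 16 := by
            rw [ddrec0, abs_div]
            rw [show |(16 : ℝ)| = 16 by norm_num]
            exact div_le_div_of_nonneg_right (abs_add_le _ _) (by norm_num) |>.trans_eq rfl
          have hnn0 : (0 : ℝ) ≤ |dd 0 n| := abs_nonneg _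
          have hnn1 : (0 : ℝ) ≤ |dd 1 n| := abs_nonneg _
          rw [hps, hps2]
          push_cast at h0 h1 ⊢
          nlinarith [habs, mul_le_mul_of_nonneg_right habs (le_of_lt h8)]
      | succ m =>
          have h0 := ih m
          have h1 := ih (m + 2)
          have hq : (1/4 : ℝ) ^ n * 8 ^ n = 2 ^ n := by rw [← mul_pow]; norm_num
          have habs : |dd (m + 1) (n + 1)|
              ≤ (|dd m n| + |dd (m + 2) n|) / 16 + (1/48) * (1/4 : ℝ) ^ n := by
            rw [ddrec1]
            refine (abs_sub _ _).trans ?_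
            have e1 : |(dd m n + dd (m + 2) n) / 16| ≤ (|dd m n| + |dd (m + 2) n|) / 16 := by
              rw [abs_div, show |(16 : ℝ)| = 16 by norm_num]
              exact div_le_div_of_nonneg_right (abs_add_le _ _) (by norm_num) |>.trans_eq rfl
            have e2 : |(1/48 : ℝ) * (1/4 : ℝ) ^ n| = (1/48) * (1/4 : ℝ) ^ n := by
              rw [abs_of_nonneg]; positivity
            rw [e2]
            linarith
          have hnn0 : (0 : ℝ) ≤ |dd m n| := abs_nonneg _
          have hnn1 : (0 : ℝ) ≤ |dd (m + 2) n| := abs_nonneg _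
          have h4 : (0 : ℝ) < (1/4 : ℝ) ^ n := by positivity
          rw [hps, hps2]
          push_cast at h0 h1 ⊢
          nlinarith [mul_le_mul_of_nonneg_right habs (le_of_lt h8), hq]

lemma dd0_tendsto : Filter.Tendsto (fun n => dd 0 n) Filter.atTop (nhds 0) := by
  have hg : Filter.Tendsto (fun n : ℕ => (1/4 : ℝ) ^ n + (1/8 : ℝ) ^ n)
      Filter.atTop (nhds 0) := by
    have t1 : Filter.Tendsto (fun n : ℕ => (1/4 : ℝ) ^ n) Filter.atTop (nhds 0) :=
      tendsto_pow_atTop_nhds_zero_of_lt_one (by norm_num) (by norm_num)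
    have t2 : Filter.Tendsto (fun n : ℕ => (1/8 : ℝ) ^ n) Filter.atTop (nhds 0) :=
      tendsto_pow_atTop_nhds_zero_of_lt_one (by norm_num) (by norm_num)
    simpa using t1.add t2
  refine squeeze_zero_norm ?_ hg
  · intro n
    have h8 : (0 : ℝ) < 8 ^ n := by positivity
    have hb := dd_bound n 0
    have heq : ((0 : ℝ) + 2 ^ n + 1) / 8 ^ n = (1/4 : ℝ) ^ n + (1/8 : ℝ) ^ n := by
      rw [zero_add, add_div]
      congr 1
      · rw [← div_pow]; norm_num
      · rw [div_pow]; norm_num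
    rw [Real.norm_eq_abs, ← heq, le_div_iff₀ h8]
    simpa using hb

lemma cc0_value : cc 0 = 1 / 3 + 5 / (14 * Real.sqrt 7) := by
  have h7 : (7 + 3 * s7) ≠ 0 := by nlinarith [s7_nonneg]
  have hs : s7 ≠ 0 := ne_of_gt s7_pos
  have hsq := s7_sq
  unfold cc AA
  rw [pow_zero, show Real.sqrt 7 = s7 from rfl]
  push_cast
  field_simp
  nlinarith [s7_sq, s7_pos]

lemma ff_tendsto :
    Filter.Tendsto (fun n => ff 0 n) Filter.atTop (nhds (1 / 3 + 5 / (14 * Real.sqrt 7))) := by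
  have h : ∀ n, ff 0 n = dd 0 n + cc 0 := by intro n; unfold dd; ring
  rw [show (1 / 3 + 5 / (14 * Real.sqrt 7) : ℝ) = 0 + cc 0 by rw [cc0_value]; ring]
  simp only [h]
  exact dd0_tendsto.add tendsto_const_nhds

lemma invPow_val (n : ℕ) : (invPow n).1 = (1/2 : ℚ) ^ n := by
  show (1 : ℚ) / 2 ^ n = (1/2 : ℚ) ^ n
  rw [div_pow]; norm_num

lemma invPow_den (n : ℕ) : ((invPow n).1).den = 2 ^ n := by
  show ((1 : ℚ) / 2 ^ n).den = 2 ^ n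
  rw [one_div, show ((2 : ℚ) ^ n) = (((2 ^ n : ℕ) : ℚ)) by push_cast; ring]
  exact Rat.inv_natCast_den_of_pos (by positivity)

lemma hash_eq_Sq (n : ℕ) : hash epsX (phiM 0) (invPow n) = Sq n 0 := by
  haveI : Fact (Nat.Prime 2) := ⟨Nat.prime_two⟩
  show hashAux (padicValNat 2 ((invPow n).1).den) epsX (phiM 0) (invPow n).1 = Sq n 0
  rw [invPow_den, invPow_val, padicValNat.prime_pow]
  exact (main_ind n).2.2.2.2.2 0

end Aux9

/-- Theorem 2.4: with `E₁ = ε # φ₀`, `lim_{n→∞} 2ⁿ E₁(2^{−n}) = 1/3 + 5/(14√7)`. -/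
theorem statement9 :
    Filter.Tendsto (fun n : ℕ => ((2 ^ n * hash epsX (phiM 0) (invPow n) : ℚ) : ℝ))
      Filter.atTop (nhds (1 / 3 + 5 / (14 * Real.sqrt 7))) := by
  have h : (fun n : ℕ => ((2 ^ n * hash epsX (phiM 0) (invPow n) : ℚ) : ℝ))
      = fun n => ff 0 n := by
    funext n
    rw [hash_eq_Sq]
    unfold ff
    push_cast
    ring
  rw [h]
  exact ff_tendsto

end
end

section
/- For every m ≥ 0 and every power of two q ≥ 2: φ_m(1/q) ≤ (4m+4)/(3q) if m is even, and φ_m(1/q) ≤ (4m+3)/(3q) if m is odd. -/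
open scoped BigOperators

noncomputable section

attribute [local instance] Classical.propDecidable

lemma phiAux_even' (n m : ℕ) (t : ℚ) (ht : t ≤ 1/2) (hm : m % 2 = 0) :
    phiAux (n+1) m t = (phiAux n (m+1) (2*t) + (8*(m:ℚ)+6)*t)/8 := by
  rw [phiAux, if_pos ht, if_pos hm]

lemma phiAux_odd' (n m : ℕ) (t : ℚ) (ht : t ≤ 1/2) (hm : m % 2 = 1) :
    phiAux (n+1) m t = (phiAux n (m-1) (2*t) + ((2*t) - (2*t)^2) + (8*(m:ℚ)+6)*t)/8 := by
  rw [phiAux, if_pos ht, if_neg (by omega)]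

lemma key_phiAux : ∀ n m : ℕ, phiAux (n+1) m ((1:ℚ)/2^(n+1)) ≤
    (if m % 2 = 0 then 4*(m:ℚ)+4 else 4*(m:ℚ)+3)/(3*2^(n+1)) := by
  intro n
  induction n with
  | zero =>
    intro m
    have hm0 : (0:ℚ) ≤ m := Nat.cast_nonneg m
    rcases Nat.even_or_odd m with hm | hm
    · have h0 : m % 2 = 0 := Nat.even_iff.mp hm
      rw [pow_one, phiAux_even' 0 m _ (le_refl _) h0, if_pos h0]
      norm_num [phiAux]
      linarith
    · have h1 : m % 2 = 1 := Nat.odd_iff.mp hm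
      rw [pow_one, phiAux_odd' 0 m _ (le_refl _) h1, if_neg (by omega)]
      norm_num [phiAux]
      linarith
  | succ n ih =>
    intro m
    set u : ℚ := 1/2^(n+1) with hu
    have hupos : 0 < u := by positivity
    have hle : (1:ℚ)/2^(n+2) ≤ 1/2 := by
      rw [div_le_div_iff₀ (by positivity) (by norm_num)]
      have : (2:ℚ) ≤ 2^(n+2) := by
        calc (2:ℚ) = 2^1 := by norm_num
        _ ≤ 2^(n+2) := by apply pow_le_pow_right₀ <;> simp
      linarith
    have ht : (1:ℚ)/2^(n+2) = u/2 := by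
      rw [hu, pow_succ]; ring
    have h2t : 2 * (u/2) = u := by ring
    rcases Nat.even_or_odd m with hm | hm
    · have h0 : m % 2 = 0 := Nat.even_iff.mp hm
      have h1 : (m+1) % 2 = 1 := by omega
      have hx := ih (m+1)
      rw [if_neg (by omega)] at hx
      rw [if_pos h0, phiAux_even' (n+1) m _ hle h0, ht, h2t]
      push_cast at hx
      rw [show (4*((m:ℚ)+1)+3)/(3*2^(n+1)) = (4*(m:ℚ)+7)*u/3 by rw [hu]; ring] at hx
      rw [show (4*(m:ℚ)+4)/(3*2^(n+1+1)) = (4*(m:ℚ)+4)*u/6 by rw [hu, pow_succ]; ring]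
      linarith
    · have h1 : m % 2 = 1 := Nat.odd_iff.mp hm
      obtain ⟨k, rfl⟩ : ∃ k, m = k + 1 := ⟨m - 1, by omega⟩
      have h0 : k % 2 = 0 := by omega
      have hx := ih k
      rw [if_pos h0] at hx
      rw [if_neg (by omega), phiAux_odd' (n+1) (k+1) _ hle h1, ht, h2t,
        Nat.add_sub_cancel]
      rw [show (4*(k:ℚ)+4)/(3*2^(n+1)) = (4*(k:ℚ)+4)*u/3 by rw [hu]; ring] at hx
      push_cast
      rw [show (4*((k:ℚ)+1)+3)/(3*2^(n+1+1)) = (4*(k:ℚ)+7)*u/6 by rw [hu, pow_succ]; ring]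
      nlinarith [sq_nonneg u]

lemma den_one_div_two_pow (n : ℕ) : ((1:ℚ)/2^n).den = 2^n := by
  rw [one_div, ← Nat.cast_ofNat, ← Nat.cast_pow, Rat.inv_natCast_den]
  have : 2^n ≠ 1 ∨ 2^n = 1 := em' _
  split <;> simp_all

/-- Lemma 2.7: `φ_m(1/q) ≤ (4m+4)/(3q)` for even `m` and `≤ (4m+3)/(3q)` for odd `m`
(`q = 2ⁿ ≥ 2`). -/
theorem statement12 (m n : ℕ) (hn : 1 ≤ n) :
    (m % 2 = 0 → evI (phiM m) (1 / 2 ^ n) ≤ (4 * (m : ℚ) + 4) / (3 * 2 ^ n)) ∧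
    (m % 2 = 1 → evI (phiM m) (1 / 2 ^ n) ≤ (4 * (m : ℚ) + 3) / (3 * 2 ^ n)) := by
  have hmem : (1:ℚ)/2^n ∈ dyadicI := by
    simpa using dyadicI_mem (i := 1) (n := n) Nat.one_le_two_pow
  have heval : evI (phiM m) (1 / 2 ^ n) = phiAux n m ((1:ℚ)/2^n) := by
    rw [evI, dif_pos hmem]
    show phiAux (padicValNat 2 ((1:ℚ)/2^n).den) m ((1:ℚ)/2^n) = _
    rw [den_one_div_two_pow, padicValNat.prime_pow]
  obtain ⟨n', rfl⟩ : ∃ n', n = n' + 1 := ⟨n - 1, by omega⟩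
  have hk := key_phiAux n' m
  constructor <;> intro hp <;> rw [heval] <;> rw [hp] at hk <;> simpa using hk

end
end

section
/- For every m ≥ 0 and every power of two q ≥ 2: φ_m(1 − 1/q) ≤ (4m+4)/(3q) if m is odd, and φ_m(1 − 1/q) ≤ (4m+3)/(3q) if m is even. -/
open scoped BigOperators

noncomputable section

attribute [local instance] Classical.propDecidable

lemma key : ∀ n : ℕ, 1 ≤ n → ∀ m : ℕ,
    phiAux n m (1 - 1 / 2 ^ n) ≤ (4 * (m : ℚ) + if m % 2 = 1 then 4 else 3) / (3 * 2 ^ n) := by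
  intro n
  induction n with
  | zero => intro h; omega
  | succ n ih =>
    intro _ m
    rcases Nat.eq_zero_or_pos n with rfl | hn
    · -- base case n = 1
      show phiAux (0 + 1) m (1 - 1 / 2 ^ 1) ≤ _
      rw [phiAux]
      norm_num
      rcases Nat.even_or_odd m with he | ho
      · have he' := Nat.even_iff.mp he
        rw [if_pos he', if_neg (by omega : ¬ m % 2 = 1)]
        rw [phiAux]
        rcases he with ⟨k, rfl⟩
        push_cast
        nlinarith [Nat.cast_nonneg (α := ℚ) k]
      · have ho' := Nat.odd_iff.mp ho
        rw [if_neg (by omega : ¬ m % 2 = 0), if_pos ho']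
        rw [phiAux]
        rcases ho with ⟨k, rfl⟩
        push_cast
        nlinarith [Nat.cast_nonneg (α := ℚ) k]
    · -- inductive step
      have hP : (0:ℚ) < 2 ^ n := by positivity
      have hQ2 : (2:ℚ) ≤ 2 ^ n := by
        calc (2:ℚ) = 2 ^ 1 := by norm_num
        _ ≤ 2 ^ n := pow_le_pow_right₀ (by norm_num) hn
      have h2 : (2:ℚ) ^ (n+1) = 2 * 2 ^ n := by ring
      have hgt : ¬ (1 - 1 / 2 ^ (n+1) : ℚ) ≤ 1 / 2 := by
        rw [not_le, h2]
        have h4 : (1:ℚ) / (2 * 2 ^ n) ≤ 1 / 4 := by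
          apply one_div_le_one_div_of_le (by norm_num)
          nlinarith
        linarith
      have ht' : 2 * (1 - 1 / 2 ^ (n+1) : ℚ) - 1 = 1 - 1 / 2 ^ n := by
        rw [h2]; field_simp; ring
      rw [phiAux, if_neg hgt, ht']
      have hmQ : (0:ℚ) ≤ (m:ℚ) := Nat.cast_nonneg m
      have hQQ : (2:ℚ) ^ n * (1 / 2 ^ n) = 1 := by field_simp
      have hQQ2 : (2 * 2 ^ n : ℚ) * (1 / (2 * 2 ^ n)) = 1 := by
        rw [mul_one_div, div_self (by positivity)]
      have heps : (1 - 1 / 2 ^ n : ℚ) - (1 - 1 / 2 ^ n) ^ 2 ≤ 1 / 2 ^ n := by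
        nlinarith [sq_nonneg (1 / 2 ^ n : ℚ)]
      rcases Nat.eq_zero_or_pos m with rfl | hm
      · rw [if_pos rfl]
        have H := ih hn 0
        rw [if_neg (by norm_num : ¬ (0:ℕ) % 2 = 1)] at H
        push_cast at H ⊢
        rw [h2]
        set A := phiAux n 0 (1 - 1 / 2 ^ n) with hA
        rw [le_div_iff₀ (by positivity : (0:ℚ) < 3 * 2 ^ n)] at H
        rw [div_le_div_iff₀ (by norm_num : (0:ℚ) < 8)
          (by positivity : (0:ℚ) < 3 * (2 * 2 ^ n))]
        nlinarith [H, hQQ2]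
      · rw [if_neg (by omega)]
        rcases Nat.even_or_odd m with he | ho
        · have he' := Nat.even_iff.mp he
          rw [if_pos he', if_neg (by omega : ¬ m % 2 = 1)]
          have H := ih hn (m - 1)
          rw [if_pos (by omega : (m - 1) % 2 = 1)] at H
          have hc : ((m - 1 : ℕ) : ℚ) = (m:ℚ) - 1 := by
            rw [Nat.cast_sub hm]; norm_num
          rw [hc] at H
          rw [h2]
          set A := phiAux n (m - 1) (1 - 1 / 2 ^ n) with hA
          rw [le_div_iff₀ (by positivity : (0:ℚ) < 3 * 2 ^ n)] at H
          rw [div_le_div_iff₀ (by norm_num : (0:ℚ) < 8)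
            (by positivity : (0:ℚ) < 3 * (2 * 2 ^ n))]
          have h1 := mul_le_mul_of_nonneg_left heps
            (le_of_lt (show (0:ℚ) < 6 * 2 ^ n by positivity))
          nlinarith [H, hQQ, hQQ2, h1]
        · have ho' := Nat.odd_iff.mp ho
          rw [if_neg (by omega : ¬ m % 2 = 0), if_pos ho']
          have H := ih hn (m + 1)
          rw [if_neg (by omega : ¬ (m+1) % 2 = 1)] at H
          push_cast at H
          rw [h2]
          set A := phiAux n (m + 1) (1 - 1 / 2 ^ n) with hA
          rw [le_div_iff₀ (by positivity : (0:ℚ) < 3 * 2 ^ n)] at H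
          rw [div_le_div_iff₀ (by norm_num : (0:ℚ) < 8)
            (by positivity : (0:ℚ) < 3 * (2 * 2 ^ n))]
          nlinarith [H, hQQ2]

lemma den_one_sub (n : ℕ) : ((1 : ℚ) - 1 / 2 ^ n).den = 2 ^ n := by
  have h1 : (1:ℕ) ≤ 2 ^ n := Nat.one_le_two_pow
  have heq : (1 : ℚ) - 1 / 2 ^ n = ((2 ^ n - 1 : ℤ) : ℚ) / ((2 ^ n : ℤ) : ℚ) := by
    push_cast
    field_simp
  have hco : Nat.Coprime ((2 ^ n - 1 : ℤ)).natAbs ((2 ^ n : ℤ)).natAbs := by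
    have h2 : ((2 ^ n - 1 : ℤ)).natAbs = 2 ^ n - 1 := by
      have : (2 ^ n - 1 : ℤ) = ((2 ^ n - 1 : ℕ) : ℤ) := by
        push_cast [Nat.cast_sub h1]; ring
      rw [this, Int.natAbs_natCast]
    have h3 : ((2 ^ n : ℤ)).natAbs = 2 ^ n := by
      rw [show ((2:ℤ)^n) = ((2^n : ℕ) : ℤ) by push_cast; ring, Int.natAbs_natCast]
    rw [h2, h3]
    show Nat.gcd (2 ^ n - 1) (2 ^ n) = 1
    rw [Nat.gcd_self_sub_left h1, Nat.gcd_one_left]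
  have := Rat.den_div_eq_of_coprime (a := 2 ^ n - 1) (b := 2 ^ n) (by positivity) hco
  rw [← heq] at this
  exact_mod_cast this

lemma mem_one_sub (n : ℕ) : (1 : ℚ) - 1 / 2 ^ n ∈ dyadicI := by
  have h1 : (1:ℕ) ≤ 2 ^ n := Nat.one_le_two_pow
  have := dyadicI_mem (i := 2 ^ n - 1) (n := n) (Nat.sub_le _ _)
  have heq : (((2 ^ n - 1 : ℕ) : ℚ)) / 2 ^ n = 1 - 1 / 2 ^ n := by
    rw [Nat.cast_sub h1]
    push_cast
    field_simp
  rwa [heq] at this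

/-- Lemma 2.8: `φ_m(1 − 1/q) ≤ (4m+4)/(3q)` for odd `m` and `≤ (4m+3)/(3q)` for even `m`
(`q = 2ⁿ ≥ 2`). -/
theorem statement13 (m n : ℕ) (hn : 1 ≤ n) :
    (m % 2 = 1 → evI (phiM m) (1 - 1 / 2 ^ n) ≤ (4 * (m : ℚ) + 4) / (3 * 2 ^ n)) ∧
    (m % 2 = 0 → evI (phiM m) (1 - 1 / 2 ^ n) ≤ (4 * (m : ℚ) + 3) / (3 * 2 ^ n)) := by
  have hev : evI (phiM m) (1 - 1 / 2 ^ n)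
      = phiAux n m (1 - 1 / 2 ^ n) := by
    rw [evI, dif_pos (mem_one_sub n)]
    show phiAux (padicValNat 2 ((1 : ℚ) - 1 / 2 ^ n).den) m _ = _
    rw [den_one_sub n, padicValNat.prime_pow]
  have H := key n hn m
  constructor
  · intro h1
    rw [if_pos h1] at H
    rw [hev]; exact H
  · intro h0
    rw [if_neg (by omega)] at H
    rw [hev]; exact H


end
end
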